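/- Let k, m be positive integers and z, w, u points in the open unit ball B of ℂ^n. Then 1/(1 - ⟨z,u⟩)^m = ∑_{j=0}^{k} (conjugate of R^{m-1}_{1,u} applied in the u-variable to) (⟨z-w,u⟩)^j/(1-⟨w,u⟩)^{j+1} + (conjugate of R^{m-1}_{1,u} applied to) (⟨z-w,u⟩)^{k+1}/((1-⟨z,u⟩)(1-⟨w,u⟩)^{k+1}), where ⟨z,u⟩ = ∑_j z_j conj(u_j). -/

import Mathlib

open Metric

noncomputable section

/-- `ℂⁿ` with the Euclidean norm. -/
abbrev En (n : ℕ) := EuclideanSpace ℂ (Fin n)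

/-- The pairing `⟨z,u⟩ = ∑_j z_j conj(u_j)`. -/
def bip {n : ℕ} (z u : En n) : ℂ := ∑ j, z j * (starRingEnd ℂ) (u j)

/-- The conjugate radial derivative `R̄ g(u) = ∑_j conj(u_j) ∂g/∂conj(u_j)(u)`,
expressed as `conj (R (conj ∘ g))(u)`. -/
def RbarRad {n : ℕ} (g : En n → ℂ) (u : En n) : ℂ :=
  (starRingEnd ℂ) (fderiv ℂ (fun v => (starRingEnd ℂ) (g v)) u u)

/-- The iterated conjugated operators `R̄^k_t = (1 + R̄/(t+k-1)) ⋯ (1 + R̄/t)`. -/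
def RkBar {n : ℕ} : ℕ → ℝ → (En n → ℂ) → (En n → ℂ)
  | 0, _, g => g
  | (k+1), t, g => fun u =>
      RkBar k t g u + (1 / ((t : ℂ) + (k : ℂ))) * RbarRad (RkBar k t g) u

/-- Holomorphic-side operator. -/
def Rkh {n : ℕ} : ℕ → ℝ → (En n → ℂ) → (En n → ℂ)
  | 0, _, g => g
  | (k+1), t, g => fun u =>
      Rkh k t g u + (1 / ((t : ℂ) + (k : ℂ))) * fderiv ℂ (Rkh k t g) u u

lemma rkBar_eq_conj_rkh {n : ℕ} (k : ℕ) (t : ℝ) (g : En n → ℂ) (u : En n) :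
    RkBar k t g u = (starRingEnd ℂ) (Rkh k t (fun v => (starRingEnd ℂ) (g v)) u) := by
  induction k generalizing u with
  | zero => simp [RkBar, Rkh]
  | succ k ih =>
    have hfun : (fun v => (starRingEnd ℂ) (RkBar k t g v)) =
        Rkh k t (fun v => (starRingEnd ℂ) (g v)) := by
      funext v; rw [ih v]; simp
    simp only [RkBar, Rkh, RbarRad, hfun, map_add, map_mul, map_div₀, map_one, map_add,
      Complex.conj_ofReal, map_natCast, ih, Complex.conj_conj]

lemma rkh_congr {n : ℕ} {U : Set (En n)} (hU : IsOpen U) {f g : En n → ℂ}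
    (h : ∀ v ∈ U, f v = g v) (k : ℕ) (t : ℝ) :
    ∀ v ∈ U, Rkh k t f v = Rkh k t g v := by
  induction k with
  | zero => exact h
  | succ k ih =>
    intro v hv
    have hev : Rkh k t f =ᶠ[nhds v] Rkh k t g :=
      Filter.eventuallyEq_of_mem (hU.mem_nhds hv) (fun x hx => ih x hx)
    simp only [Rkh, ih v hv, hev.fderiv_eq]

lemma rkh_contDiffOn {n : ℕ} {U : Set (En n)} (hU : IsOpen U) {f : En n → ℂ}
    (hf : ContDiffOn ℂ (⊤ : ℕ∞) f U) (k : ℕ) (t : ℝ) :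
    ContDiffOn ℂ (⊤ : ℕ∞) (Rkh k t f) U := by
  induction k with
  | zero => exact hf
  | succ k ih =>
    have hd : ContDiffOn ℂ (⊤ : ℕ∞) (fderiv ℂ (Rkh k t f)) U :=
      ih.fderiv_of_isOpen hU (le_of_eq (show ((⊤:ℕ∞) : WithTop ℕ∞) = (⊤:ℕ∞) + 1 from rfl).symm)
    exact ih.add (contDiffOn_const.mul (hd.clm_apply contDiffOn_id))

lemma rkh_add {n : ℕ} {U : Set (En n)} (hU : IsOpen U) {f g : En n → ℂ}
    (hf : ContDiffOn ℂ (⊤ : ℕ∞) f U) (hg : ContDiffOn ℂ (⊤ : ℕ∞) g U) (k : ℕ) (t : ℝ) :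
    ∀ v ∈ U, Rkh k t (fun x => f x + g x) v = Rkh k t f v + Rkh k t g v := by
  induction k with
  | zero => intro v _; rfl
  | succ k ih =>
    intro v hv
    have hev : Rkh k t (fun x => f x + g x) =ᶠ[nhds v]
        (fun x => Rkh k t f x + Rkh k t g x) :=
      Filter.eventuallyEq_of_mem (hU.mem_nhds hv) (fun x hx => ih x hx)
    have hdf : DifferentiableAt ℂ (Rkh k t f) v :=
      ((rkh_contDiffOn hU hf k t).contDiffAt (hU.mem_nhds hv)).differentiableAt (by simp)
    have hdg : DifferentiableAt ℂ (Rkh k t g) v :=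
      ((rkh_contDiffOn hU hg k t).contDiffAt (hU.mem_nhds hv)).differentiableAt (by simp)
    simp only [Rkh, ih v hv, hev.fderiv_eq, fderiv_fun_add hdf hdg,
      ContinuousLinearMap.add_apply]
    ring

lemma rkh_zero {n : ℕ} (k : ℕ) (t : ℝ) :
    Rkh (n := n) k t (fun _ => (0:ℂ)) = fun _ => 0 := by
  induction k with
  | zero => rfl
  | succ k ih => funext v; simp [Rkh, ih]

lemma rkh_sum {n : ℕ} {U : Set (En n)} (hU : IsOpen U) {ι : Type*} (s : Finset ι)
    {f : ι → En n → ℂ} (hf : ∀ i ∈ s, ContDiffOn ℂ (⊤ : ℕ∞) (f i) U) (k : ℕ) (t : ℝ) :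
    ∀ v ∈ U, Rkh k t (fun x => ∑ i ∈ s, f i x) v = ∑ i ∈ s, Rkh k t (f i) v := by
  classical
  induction s using Finset.induction with
  | empty =>
    intro v hv
    simp [rkh_zero]
  | insert a s' hns ih =>
    intro v hv
    have h1 : ∀ v ∈ U, Rkh k t (fun x => ∑ i ∈ insert a s', f i x) v
        = Rkh k t (fun x => f a x + ∑ i ∈ s', f i x) v :=
      rkh_congr hU (fun x _ => by rw [Finset.sum_insert hns]) k t
    have hsum : ContDiffOn ℂ (⊤ : ℕ∞) (fun x => ∑ i ∈ s', f i x) U := by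
      apply ContDiffOn.sum
      intro i hi; exact hf i (Finset.mem_insert_of_mem hi)
    rw [h1 v hv, rkh_add hU (hf a (Finset.mem_insert_self a s')) hsum k t v hv,
      Finset.sum_insert hns, ih (fun i hi => hf i (Finset.mem_insert_of_mem hi)) v hv]

lemma bip_conj {n : ℕ} (z v : En n) :
    (starRingEnd ℂ) (bip z v) = (inner ℂ z v : ℂ) := by
  simp [bip, PiLp.inner_apply, RCLike.inner_apply, map_sum, mul_comm]

lemma inner_fun_eq {n : ℕ} (z : En n) :
    (fun v : En n => (inner ℂ z v : ℂ)) = ⇑(innerSL ℂ z) := rfl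

lemma rkh_geom_step (s : ℕ) {y : ℂ} (hy : 1 - y ≠ 0) :
    ((1-y)^(s+1))⁻¹ + 1/(((1:ℝ):ℂ)+(s:ℂ)) *
      ((-(((s:ℂ)+1) * (1-y)^s * (-1)) / ((1-y)^(s+1))^2) * y) = ((1-y)^(s+1+1))⁻¹ := by
  have hs1 : (1:ℂ) + (s:ℂ) ≠ 0 := fun h =>
    Nat.cast_add_one_ne_zero (R := ℂ) s (by linear_combination h)
  rw [Complex.ofReal_one]
  obtain ⟨t, ht, rfl⟩ : ∃ t : ℂ, t ≠ 0 ∧ y = 1 - t := ⟨1 - y, hy, by ring⟩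
  simp only [show (1:ℂ) - (1 - t) = t from by ring]
  field_simp
  ring

lemma cont_one_sub_inner {n : ℕ} (z : En n) :
    Continuous fun v : En n => 1 - (inner ℂ z v : ℂ) := by
  rw [show (fun v : En n => 1 - (inner ℂ z v : ℂ))
      = (fun v => 1 - (innerSL ℂ z) v) from rfl]
  exact continuous_const.sub (innerSL ℂ z).continuous

lemma contDiff_one_sub_inner {n : ℕ} (z : En n) :
    ContDiff ℂ (⊤ : ℕ∞) fun v : En n => 1 - (inner ℂ z v : ℂ) := by
  rw [show (fun v : En n => 1 - (inner ℂ z v : ℂ))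
      = (fun v => 1 - (innerSL ℂ z) v) from rfl]
  exact contDiff_const.sub (innerSL ℂ z).contDiff

lemma rkh_geom {n : ℕ} (z : En n) (s : ℕ) :
    ∀ u : En n, 1 - (inner ℂ z u : ℂ) ≠ 0 →
      Rkh s 1 (fun v => (1 - (inner ℂ z v : ℂ))⁻¹) u
        = ((1 - (inner ℂ z u : ℂ)) ^ (s+1))⁻¹ := by
  induction s with
  | zero => intro u hu; simp [Rkh]
  | succ s ih =>
    intro u hu
    have hc : Continuous fun v : En n => 1 - (inner ℂ z v : ℂ) := by
      rw [show (fun v : En n => 1 - (inner ℂ z v : ℂ))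
          = (fun v => 1 - (innerSL ℂ z) v) from rfl]
      exact continuous_const.sub (innerSL ℂ z).continuous
    have hUopen : IsOpen {v : En n | 1 - (inner ℂ z v : ℂ) ≠ 0} :=
      isOpen_compl_singleton.preimage hc
    have hev : Rkh s 1 (fun v => (1 - (inner ℂ z v : ℂ))⁻¹) =ᶠ[nhds u]
        (fun v => ((1 - (inner ℂ z v : ℂ)) ^ (s+1))⁻¹) :=
      Filter.eventuallyEq_of_mem (hUopen.mem_nhds hu) (fun x hx => ih x hx)
    set y : ℂ := (inner ℂ z u : ℂ) with hy
    have hyne : 1 - y ≠ 0 := hu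
    have hd : HasDerivAt (fun x : ℂ => ((1-x)^(s+1))⁻¹)
        (-(((s:ℂ)+1) * (1-y)^(s+1-1) * (-1)) / ((1-y)^(s+1))^2) y := by
      have h1 : HasDerivAt (fun x : ℂ => 1 - x) (-1) y := (hasDerivAt_id y).const_sub 1
      have h2 := h1.pow (s+1)
      have h3 := h2.inv (pow_ne_zero _ hyne)
      have h4 : HasDerivAt (fun x : ℂ => ((1-x)^(s+1))⁻¹) _ y := h3
      simpa using h4
    have hL : HasFDerivAt (fun v : En n => (inner ℂ z v : ℂ)) (innerSL ℂ z) u := by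
      rw [inner_fun_eq]; exact (innerSL ℂ z).hasFDerivAt
    have hG : HasFDerivAt (fun v : En n => ((1 - (inner ℂ z v : ℂ))^(s+1))⁻¹)
        ((-(((s:ℂ)+1) * (1-y)^(s+1-1) * (-1)) / ((1-y)^(s+1))^2) • (innerSL ℂ z)) u :=
      hd.comp_hasFDerivAt (h₂ := fun x : ℂ => ((1-x)^(s+1))⁻¹)
        (f := fun v : En n => (inner ℂ z v : ℂ)) u hL
    have hfd : fderiv ℂ (Rkh s 1 (fun v => (1 - (inner ℂ z v : ℂ))⁻¹)) u u
        = (-(((s:ℂ)+1) * (1-y)^(s+1-1) * (-1)) / ((1-y)^(s+1))^2) * y := by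
      rw [hev.fderiv_eq, hG.fderiv]
      simp only [ContinuousLinearMap.coe_smul', Pi.smul_apply, innerSL_apply_apply, smul_eq_mul, ← hy]
    simp only [Rkh, ih u hu, hfd]
    rw [show s + 1 - 1 = s from rfl]
    exact rkh_geom_step s hyne

lemma scalar_id (k : ℕ) {a b : ℂ} (ha : 1 - a ≠ 0) (hb : 1 - b ≠ 0) :
    (∑ j ∈ Finset.range (k+1), (a-b)^j/(1-b)^(j+1))
      + (a-b)^(k+1)/((1-a)*(1-b)^(k+1)) = (1-a)⁻¹ := by
  induction k with
  | zero =>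
    simp only [Finset.sum_range_one, pow_zero, pow_one, zero_add, pow_one]
    field_simp
    ring
  | succ k ih =>
    rw [Finset.sum_range_succ]
    have key : (a-b)^(k+1)/(1-b)^(k+1+1) + (a-b)^(k+1+1)/((1-a)*(1-b)^(k+1+1))
        = (a-b)^(k+1)/((1-a)*(1-b)^(k+1)) := by
      field_simp
      ring
    rw [add_assoc, key, ih]

end

/-- For positive integers `k`, `m` and `z, w, u` in the open unit ball of `ℂⁿ`:
`1/(1-⟨z,u⟩)^m = ∑_{j=0}^k R̄^{m-1}_{1,u} [⟨z-w,u⟩^j/(1-⟨w,u⟩)^{j+1}]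
  + R̄^{m-1}_{1,u} [⟨z-w,u⟩^{k+1}/((1-⟨z,u⟩)(1-⟨w,u⟩)^{k+1})]`. -/
theorem taylor_kernel_expansion (n : ℕ) (k m : ℕ) (hk : 0 < k) (hm : 0 < m)
    (z w u : En n) (hz : z ∈ ball (0 : En n) 1) (hw : w ∈ ball (0 : En n) 1)
    (hu : u ∈ ball (0 : En n) 1) :
    1 / (1 - bip z u) ^ m =
      (∑ j ∈ Finset.range (k + 1),
        RkBar (m - 1) 1 (fun v => (bip (z - w) v) ^ j / (1 - bip w v) ^ (j + 1)) u) +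
      RkBar (m - 1) 1
        (fun v => (bip (z - w) v) ^ (k + 1) /
          ((1 - bip z v) * (1 - bip w v) ^ (k + 1))) u := by
  classical
  rw [mem_ball_zero_iff] at hz hw hu
  have hne : ∀ x : En n, ‖x‖ < 1 → 1 - (inner ℂ x u : ℂ) ≠ 0 := by
    intro x hx h
    have h1 : ‖(inner ℂ x u : ℂ)‖ ≤ ‖x‖ * ‖u‖ := norm_inner_le_norm x u
    have h2 : (inner ℂ x u : ℂ) = 1 := by linear_combination -h
    rw [h2] at h1
    simp only [norm_one] at h1
    nlinarith [norm_nonneg x, norm_nonneg u]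
  have huz : 1 - (inner ℂ z u : ℂ) ≠ 0 := hne z hz
  have huw : 1 - (inner ℂ w u : ℂ) ≠ 0 := hne w hw
  set U : Set (En n) :=
    {v | 1 - (inner ℂ z v : ℂ) ≠ 0} ∩ {v | 1 - (inner ℂ w v : ℂ) ≠ 0} with hU
  have hUopen : IsOpen U :=
    (isOpen_compl_singleton.preimage (cont_one_sub_inner z)).inter
      (isOpen_compl_singleton.preimage (cont_one_sub_inner w))
  have huU : u ∈ U := ⟨huz, huw⟩
  have hvz : ∀ v ∈ U, 1 - (inner ℂ z v : ℂ) ≠ 0 := fun v hv => hv.1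
  have hvw : ∀ v ∈ U, 1 - (inner ℂ w v : ℂ) ≠ 0 := fun v hv => hv.2
  set fj : ℕ → En n → ℂ :=
    fun j v => (inner ℂ (z-w) v : ℂ)^j / (1 - (inner ℂ w v : ℂ))^(j+1) with hfjdef
  set rem : En n → ℂ := fun v => (inner ℂ (z-w) v : ℂ)^(k+1) /
    ((1 - (inner ℂ z v : ℂ)) * (1 - (inner ℂ w v : ℂ))^(k+1)) with hremdef
  have hinzw : ContDiff ℂ (⊤ : ℕ∞) fun v : En n => (inner ℂ (z-w) v : ℂ) := by
    rw [inner_fun_eq]; exact (innerSL ℂ (z-w)).contDiff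
  have hfj : ∀ j, ContDiffOn ℂ (⊤ : ℕ∞) (fj j) U := fun j =>
    ContDiffOn.div ((hinzw.pow j).contDiffOn)
      (((contDiff_one_sub_inner w).pow (j+1)).contDiffOn)
      (fun v hv => pow_ne_zero _ (hvw v hv))
  have hrem : ContDiffOn ℂ (⊤ : ℕ∞) rem U :=
    ContDiffOn.div ((hinzw.pow (k+1)).contDiffOn)
      (((contDiff_one_sub_inner z).contDiffOn).mul
        (((contDiff_one_sub_inner w).pow (k+1)).contDiffOn))
      (fun v hv => mul_ne_zero (hvz v hv) (pow_ne_zero _ (hvw v hv)))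
  have hconjF : ∀ j, (fun v =>
      (starRingEnd ℂ) ((bip (z-w) v)^j / (1 - bip w v)^(j+1))) = fj j := by
    intro j; funext v
    simp [map_div₀, map_pow, map_sub, map_one, bip_conj, hfjdef]
  have hconjR : (fun v => (starRingEnd ℂ) ((bip (z-w) v)^(k+1) /
      ((1 - bip z v) * (1 - bip w v)^(k+1)))) = rem := by
    funext v
    simp [map_div₀, map_pow, map_sub, map_one, map_mul, bip_conj, hremdef]
  have h1 : ∀ j, RkBar (m-1) 1
      (fun v => (bip (z-w) v)^j / (1 - bip w v)^(j+1)) u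
        = (starRingEnd ℂ) (Rkh (m-1) 1 (fj j) u) := by
    intro j; rw [rkBar_eq_conj_rkh, hconjF j]
  have h2 : RkBar (m-1) 1 (fun v => (bip (z-w) v)^(k+1) /
      ((1 - bip z v) * (1 - bip w v)^(k+1))) u
        = (starRingEnd ℂ) (Rkh (m-1) 1 rem u) := by
    rw [rkBar_eq_conj_rkh, hconjR]
  have e2 : ∀ v ∈ U, ((∑ j ∈ Finset.range (k+1), fj j v) + rem v)
      = (1 - (inner ℂ z v : ℂ))⁻¹ := by
    intro v hv
    have := scalar_id k (a := (inner ℂ z v : ℂ)) (b := (inner ℂ w v : ℂ))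
      (hvz v hv) (hvw v hv)
    simpa [hfjdef, hremdef, inner_sub_left] using this
  have hsumCD : ContDiffOn ℂ (⊤ : ℕ∞)
      (fun v => ∑ j ∈ Finset.range (k+1), fj j v) U :=
    ContDiffOn.sum (fun j _ => hfj j)
  have e1 : (∑ j ∈ Finset.range (k+1), Rkh (m-1) 1 (fj j) u)
      + Rkh (m-1) 1 rem u
      = ((1 - (inner ℂ z u : ℂ))^((m-1)+1))⁻¹ := by
    rw [← rkh_sum hUopen (Finset.range (k+1)) (fun j _ => hfj j) (m-1) 1 u huU,
      ← rkh_add hUopen hsumCD hrem (m-1) 1 u huU,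
      rkh_congr hUopen e2 (m-1) 1 u huU]
    exact rkh_geom z (m-1) u huz
  have hbip : bip z u = (starRingEnd ℂ) (inner ℂ z u : ℂ) := by
    rw [← bip_conj z u, Complex.conj_conj]
  rw [Finset.sum_congr rfl (fun j _ => h1 j), h2, ← map_sum, ← map_add, e1,
    Nat.sub_add_cancel hm, hbip]
  rw [map_inv₀, map_pow, map_sub, map_one]
  exact one_div _
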